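/- Let Q0, Q*, Q1 be probability measures on the real line such that Q0 ≤_lr Q* ≤_lr Q1 and Q0((x,∞)) + Q1((−∞,x)) > 0 for every x ∈ ℝ. Let Q := λ0·Q0 + λ1·Q1 with λ0, λ1 > 0 and λ0 + λ1 = 1. Then the limit g(y) := lim_{x→y−} Q*((x,y])/Q((x,y]) (with the convention 0/0 := 0) exists for every y ∈ ℝ, and g defines a bounded density of Q* with respect to Q. -/

import Mathlib

open MeasureTheory Set Filter
open scoped ENNReal Topology

noncomputable section

/-- `g` is a (measurable, nonnegative) density of `Q` with respect to `μ`,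
i.e. `Q B = ∫_B g dμ` for all Borel sets `B`. -/
def IsDensity (Q μ : Measure ℝ) (g : ℝ → ENNReal) : Prop :=
  Measurable g ∧ ∀ B : Set ℝ, MeasurableSet B → Q B = ∫⁻ x in B, g x ∂μ

/-- Likelihood ratio order `Q1 ≤_lr Q2`: there exist a σ-finite measure `μ` and densities
`g1 = dQ1/dμ`, `g2 = dQ2/dμ` such that the ratio `g2/g1` (with values in `[0,∞]`)
is nondecreasing on the set `{g1 + g2 > 0}`. -/
def LikelihoodRatioLE (Q1 Q2 : Measure ℝ) : Prop :=
  ∃ (μ : Measure ℝ) (g1 g2 : ℝ → ENNReal), SigmaFinite μ ∧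
    IsDensity Q1 μ g1 ∧ IsDensity Q2 μ g2 ∧
    ∀ x y : ℝ, x ≤ y → 0 < g1 x + g2 x → 0 < g1 y + g2 y →
      g2 x / g1 x ≤ g2 y / g1 y

/-! ### generic mediant lemmas -/

lemma mediant_right {a b c d : ℝ≥0∞} (hd : d ≠ 0) (hbt : b ≠ ⊤) (hdt : d ≠ ⊤)
    (h : c * b ≤ a * d) : c / d ≤ (a + c) / (b + d) := by
  rw [ENNReal.le_div_iff_mul_le (Or.inl (by simp [hd])) (Or.inl (by simp [hbt, hdt]))]
  rw [mul_add, ENNReal.div_mul_cancel hd hdt]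
  refine add_le_add_left ?_ c
  calc c / d * b = c * b / d := by
        simp [div_eq_mul_inv, mul_right_comm]
    _ ≤ a * d / d := ENNReal.div_le_div h le_rfl
    _ = a * (d / d) := by rw [mul_div_assoc]
    _ = a := by rw [ENNReal.div_self hd hdt, mul_one]

lemma mediant_left {a b c d : ℝ≥0∞} (hd : d ≠ 0) (hbt : b ≠ ⊤) (hdt : d ≠ ⊤)
    (h : a * d ≤ c * b) : (a + c) / (b + d) ≤ c / d := by
  rw [ENNReal.div_le_iff_le_mul (Or.inl (by simp [hd])) (Or.inl (by simp [hbt, hdt]))]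
  rw [mul_add, ENNReal.div_mul_cancel hd hdt]
  refine add_le_add ?_ le_rfl
  calc a = a * (d / d) := by rw [ENNReal.div_self hd hdt, mul_one]
    _ = a * d / d := by rw [mul_div_assoc]
    _ ≤ c * b / d := ENNReal.div_le_div h le_rfl
    _ = c / d * b := by simp [div_eq_mul_inv, mul_right_comm]

lemma le_mediant {a b c d : ℝ≥0∞} (hbt : b ≠ ⊤) (hdt : d ≠ ⊤) :
    min (a / b) (c / d) ≤ (a + c) / (b + d) := by
  by_cases h0 : b + d = 0 ∧ a + c = 0
  · obtain ⟨h1, h2⟩ := h0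
    simp only [add_eq_zero] at h1 h2
    simp [h1.1, h1.2, h2.1, h2.2]
  · rw [ENNReal.le_div_iff_mul_le (by tauto) (Or.inl (by simp [hbt, hdt]))]
    rw [mul_add]
    refine add_le_add ?_ ?_
    · exact le_trans (mul_le_mul_left (min_le_left _ _) b) (by rw [mul_comm]; exact ENNReal.mul_div_le)
    · exact le_trans (mul_le_mul_left (min_le_right _ _) d) (by rw [mul_comm]; exact ENNReal.mul_div_le)

lemma mediant_le {a b c d : ℝ≥0∞} (hbt : b ≠ ⊤) (hdt : d ≠ ⊤) :
    (a + c) / (b + d) ≤ max (a / b) (c / d) := by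
  by_cases hM : max (a / b) (c / d) = ⊤
  · rw [hM]; exact le_top
  · have hab : a / b ≠ ⊤ := by intro h; rw [max_eq_top] at hM; tauto
    have hcd : c / d ≠ ⊤ := by intro h; rw [max_eq_top] at hM; tauto
    have key : ∀ u v : ℝ≥0∞, v ≠ ⊤ → u / v ≠ ⊤ → u ≤ max (a / b) (c / d) * v →
        True := fun _ _ _ _ _ => trivial
    by_cases hbd : b + d = 0
    · rw [add_eq_zero] at hbd
      have ha : a = 0 := by
        by_contra ha
        exact hab (by rw [hbd.1, ENNReal.div_zero ha])
      have hc : c = 0 := by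
        by_contra hc
        exact hcd (by rw [hbd.2, ENNReal.div_zero hc])
      simp [ha, hc]
    · rw [ENNReal.div_le_iff_le_mul (Or.inl hbd) (Or.inl (by simp [hbt, hdt]))]
      rw [mul_add]
      refine add_le_add ?_ ?_
      · by_cases hb : b = 0
        · have : a = 0 := by
            by_contra ha; exact hab (by rw [hb, ENNReal.div_zero ha])
          simp [this]
        · calc a = a / b * b := (ENNReal.div_mul_cancel hb hbt).symm
            _ ≤ max (a / b) (c / d) * b := mul_le_mul_left (le_max_left _ _) b
      · by_cases hd : d = 0
        · have : c = 0 := by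
            by_contra hc; exact hcd (by rw [hd, ENNReal.div_zero hc])
          simp [this]
        · calc c = c / d * d := (ENNReal.div_mul_cancel hd hdt).symm
            _ ≤ max (a / b) (c / d) * d := mul_le_mul_left (le_max_right _ _) d

/-! ### density basics and the TP2 (interval) inequality -/

lemma IsDensity.lintegral_univ {P μ : Measure ℝ} {f : ℝ → ℝ≥0∞} (h : IsDensity P μ f) :
    ∫⁻ x, f x ∂μ = P univ := by
  rw [h.2 univ MeasurableSet.univ, setLIntegral_univ]

lemma IsDensity.ae_lt_top {P μ : Measure ℝ} {f : ℝ → ℝ≥0∞} [IsFiniteMeasure P]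
    (h : IsDensity P μ f) : ∀ᵐ x ∂μ, f x < ⊤ :=
  MeasureTheory.ae_lt_top h.1 (by rw [h.lintegral_univ]; exact measure_ne_top P univ)

lemma IsDensity.absCont {P μ : Measure ℝ} {f : ℝ → ℝ≥0∞} (h : IsDensity P μ f) :
    P ≪ μ := by
  refine Measure.AbsolutelyContinuous.mk (fun s hs hs0 => ?_)
  rw [h.2 s hs]
  have : μ.restrict s = 0 := Measure.restrict_eq_zero.2 hs0
  rw [this, lintegral_zero_measure]

/-- Pointwise two-point inequality coming from monotonicity of the likelihood ratio. -/
lemma lr_pointwise {f0 fs : ℝ → ℝ≥0∞}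
    (hmono : ∀ x y : ℝ, x ≤ y → 0 < f0 x + fs x → 0 < f0 y + fs y →
      fs x / f0 x ≤ fs y / f0 y)
    {p q : ℝ} (hpq : p ≤ q) (hfsq : fs q < ⊤) (hf0q : f0 q < ⊤) (hf0p : f0 p < ⊤) :
    fs p * f0 q ≤ f0 p * fs q := by
  by_cases hp : 0 < f0 p + fs p
  · by_cases hq : 0 < f0 q + fs q
    · have hr := hmono p q hpq hp hq
      by_cases h0q : f0 q = 0
      · rw [h0q, mul_zero]; exact zero_le
      by_cases h0p : f0 p = 0
      · have hfsp : fs p ≠ 0 := by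
          intro h; rw [h0p, h] at hp; simp at hp
        rw [h0p, ENNReal.div_zero hfsp] at hr
        have : fs q / f0 q < ⊤ := ENNReal.div_lt_top hfsq.ne h0q
        exact absurd (top_le_iff.1 hr) this.ne
      · have h1 : fs p ≤ fs q / f0 q * f0 p := by
          calc fs p = fs p / f0 p * f0 p := (ENNReal.div_mul_cancel h0p hf0p.ne).symm
            _ ≤ fs q / f0 q * f0 p := mul_le_mul_left hr _
        calc fs p * f0 q ≤ fs q / f0 q * f0 p * f0 q := mul_le_mul_left h1 _
          _ = f0 p * (fs q / f0 q * f0 q) := by ring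
          _ = f0 p * fs q := by rw [ENNReal.div_mul_cancel h0q hf0q.ne]
    · have : f0 q = 0 := by
        simp only [not_lt, nonpos_iff_eq_zero, add_eq_zero] at hq
        exact hq.1
      rw [this, mul_zero]; exact zero_le
  · have : fs p = 0 := by
      simp only [not_lt, nonpos_iff_eq_zero, add_eq_zero] at hp
      exact hp.2
    rw [this, zero_mul]; exact zero_le

/-- TP2 / interval form of the likelihood ratio order: if `I` lies entirely to the left
of `J` then `R I * P J ≤ P I * R J`. -/
lemma tp2 {P R : Measure ℝ} [IsFiniteMeasure P] [IsFiniteMeasure R]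
    (h : LikelihoodRatioLE P R) {I J : Set ℝ} (hI : MeasurableSet I) (hJ : MeasurableSet J)
    (hIJ : ∀ p ∈ I, ∀ q ∈ J, p ≤ q) : R I * P J ≤ P I * R J := by
  obtain ⟨μ, f0, fs, hσ, hP, hR, hmono⟩ := h
  have hf0m := hP.1
  have hfsm := hR.1
  have hf0fin : ∀ᵐ x ∂μ, f0 x < ⊤ := hP.ae_lt_top
  have hfsfin : ∀ᵐ x ∂μ, fs x < ⊤ := hR.ae_lt_top
  calc R I * P J = ∫⁻ p in I, fs p * P J ∂μ := by
        rw [hR.2 I hI, lintegral_mul_const _ hfsm]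
    _ ≤ ∫⁻ p in I, f0 p * R J ∂μ := by
        refine lintegral_mono_ae ?_
        filter_upwards [ae_restrict_of_ae hfsfin, ae_restrict_of_ae hf0fin,
          ae_restrict_mem hI] with p hfsp hf0p hpI
        calc fs p * P J = ∫⁻ q in J, fs p * f0 q ∂μ := by
              rw [hP.2 J hJ, lintegral_const_mul _ hf0m]
          _ ≤ ∫⁻ q in J, f0 p * fs q ∂μ := by
              refine lintegral_mono_ae ?_
              filter_upwards [ae_restrict_of_ae hfsfin, ae_restrict_of_ae hf0fin,
                ae_restrict_mem hJ] with q hfsq hf0q hqJ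
              exact lr_pointwise hmono (hIJ p hpI q hqJ) hfsq hf0q hf0p
          _ = f0 p * R J := by
              rw [lintegral_const_mul _ hfsm, ← hR.2 J hJ]
    _ = P I * R J := by
        rw [lintegral_mul_const _ hf0m, ← hP.2 I hI]

/-! ### interval-ratio comparison lemmas -/

/-- For `P ≤lr R` and an interval `I` to the left of `J`, the ratio `P/R` on `J` is
at most that on `I`. -/
lemma ratio_le_ratio {P R : Measure ℝ} [IsFiniteMeasure P] [IsFiniteMeasure R]
    (h : LikelihoodRatioLE P R) {I J : Set ℝ} (hI : MeasurableSet I) (hJ : MeasurableSet J)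
    (hIJ : ∀ p ∈ I, ∀ q ∈ J, p ≤ q) (hRI : R I ≠ 0) : P J / R J ≤ P I / R I := by
  have cross := tp2 h hI hJ hIJ
  by_cases hRJ : R J = 0
  · have : P J = 0 := by
      rw [hRJ, mul_zero] at cross
      have h0 : R I * P J = 0 := le_antisymm cross (zero_le)
      rcases mul_eq_zero.1 h0 with h' | h'
      · exact absurd h' hRI
      · exact h'
    simp [this]
  · rw [ENNReal.le_div_iff_mul_le (Or.inl hRI) (Or.inl (measure_ne_top R I))]
    calc P J / R J * R I = P J * R I / R J := by simp [div_eq_mul_inv, mul_right_comm]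
      _ ≤ P I * R J / R J := ENNReal.div_le_div (le_trans (le_of_eq (mul_comm _ _)) cross) le_rfl
      _ = P I * (R J / R J) := by rw [mul_div_assoc]
      _ = P I := by rw [ENNReal.div_self hRJ (measure_ne_top R J), mul_one]

/-- For `P ≤lr R` and an interval `I` to the left of `J`, the ratio `R/P` on `I` is
at most that on `J`. -/
lemma ratio_ge_ratio {P R : Measure ℝ} [IsFiniteMeasure P] [IsFiniteMeasure R]
    (h : LikelihoodRatioLE P R) {I J : Set ℝ} (hI : MeasurableSet I) (hJ : MeasurableSet J)
    (hIJ : ∀ p ∈ I, ∀ q ∈ J, p ≤ q) (hPJ : P J ≠ 0) : R I / P I ≤ R J / P J := by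
  have cross := tp2 h hI hJ hIJ
  by_cases hPI : P I = 0
  · have : R I = 0 := by
      rw [hPI, zero_mul] at cross
      have h0 : R I * P J = 0 := le_antisymm cross (zero_le)
      rcases mul_eq_zero.1 h0 with h' | h'
      · exact h'
      · exact absurd h' hPJ
    simp [this]
  · rw [ENNReal.le_div_iff_mul_le (Or.inl hPJ) (Or.inl (measure_ne_top P J))]
    calc R I / P I * P J = R I * P J / P I := by simp [div_eq_mul_inv, mul_right_comm]
      _ ≤ P I * R J / P I := ENNReal.div_le_div cross le_rfl
      _ = R J * (P I / P I) := by rw [mul_comm (P I) (R J), mul_div_assoc]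
      _ = R J := by rw [ENNReal.div_self hPI (measure_ne_top P I), mul_one]

/-! ### monotonicity of interval ratios -/

lemma measure_Ioc_split {P : Measure ℝ} {x x' y : ℝ} (h1 : x ≤ x') (h2 : x' ≤ y) :
    P (Ioc x y) = P (Ioc x x') + P (Ioc x' y) := by
  rw [← Set.Ioc_union_Ioc_eq_Ioc h1 h2]
  exact measure_union (Set.Ioc_disjoint_Ioc_of_le le_rfl) measurableSet_Ioc

lemma ratio_lo_antitoneOn {P R : Measure ℝ} [IsFiniteMeasure P] [IsFiniteMeasure R]
    (h : LikelihoodRatioLE P R) (y : ℝ) (hy : ∀ x ∈ Iio y, R (Ioc x y) ≠ 0) :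
    AntitoneOn (fun x => P (Ioc x y) / R (Ioc x y)) (Iio y) := by
  intro x hx x' hx' hxx'
  simp only
  rw [measure_Ioc_split (P := P) hxx' (le_of_lt hx'), measure_Ioc_split (P := R) hxx' (le_of_lt hx')]
  refine mediant_right (hy x' hx') (measure_ne_top R _) (measure_ne_top R _) ?_
  have := tp2 h (measurableSet_Ioc (a := x) (b := x')) (measurableSet_Ioc (a := x') (b := y))
    (fun p hp q hq => le_trans hp.2 (le_of_lt hq.1))
  rw [mul_comm (P (Ioc x' y)) (R (Ioc x x'))]
  exact this

lemma ratio_hi_monotoneOn {P R : Measure ℝ} [IsFiniteMeasure P] [IsFiniteMeasure R]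
    (h : LikelihoodRatioLE P R) (y : ℝ) (hy : ∀ x ∈ Iio y, P (Ioc x y) ≠ 0) :
    MonotoneOn (fun x => R (Ioc x y) / P (Ioc x y)) (Iio y) := by
  intro x hx x' hx' hxx'
  simp only
  rw [measure_Ioc_split (P := P) hxx' (le_of_lt hx'), measure_Ioc_split (P := R) hxx' (le_of_lt hx')]
  refine mediant_left (hy x' hx') (measure_ne_top P _) (measure_ne_top P _) ?_
  have := tp2 h (measurableSet_Ioc (a := x) (b := x')) (measurableSet_Ioc (a := x') (b := y))
    (fun p hp q hq => le_trans hp.2 (le_of_lt hq.1))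
  rw [mul_comm (R (Ioc x' y)) (P (Ioc x x'))]
  exact this

lemma ratio_lo_antitoneOn' {P R : Measure ℝ} [IsFiniteMeasure P] [IsFiniteMeasure R]
    (h : LikelihoodRatioLE P R) (y : ℝ) (hy : ∀ z ∈ Ioi y, R (Ioc y z) ≠ 0) :
    AntitoneOn (fun z => P (Ioc y z) / R (Ioc y z)) (Ioi y) := by
  intro z hz z' hz' hzz'
  simp only
  rw [measure_Ioc_split (P := P) (le_of_lt hz) hzz', measure_Ioc_split (P := R) (le_of_lt hz) hzz']
  rw [add_comm (P (Ioc y z)) (P (Ioc z z')), add_comm (R (Ioc y z)) (R (Ioc z z'))]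
  refine mediant_left (hy z hz) (measure_ne_top R _) (measure_ne_top R _) ?_
  have := tp2 h (measurableSet_Ioc (a := y) (b := z)) (measurableSet_Ioc (a := z) (b := z'))
    (fun p hp q hq => le_trans hp.2 (le_of_lt hq.1))
  rw [mul_comm (P (Ioc z z')) (R (Ioc y z))]
  exact this

lemma ratio_hi_monotoneOn' {P R : Measure ℝ} [IsFiniteMeasure P] [IsFiniteMeasure R]
    (h : LikelihoodRatioLE P R) (y : ℝ) (hy : ∀ z ∈ Ioi y, P (Ioc y z) ≠ 0) :
    MonotoneOn (fun z => R (Ioc y z) / P (Ioc y z)) (Ioi y) := by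
  intro z hz z' hz' hzz'
  simp only
  rw [measure_Ioc_split (P := P) (le_of_lt hz) hzz', measure_Ioc_split (P := R) (le_of_lt hz) hzz']
  rw [add_comm (P (Ioc y z)) (P (Ioc z z')), add_comm (R (Ioc y z)) (R (Ioc z z'))]
  refine mediant_right (hy z hz) (measure_ne_top P _) (measure_ne_top P _) ?_
  have := tp2 h (measurableSet_Ioc (a := y) (b := z)) (measurableSet_Ioc (a := z) (b := z'))
    (fun p hp q hq => le_trans hp.2 (le_of_lt hq.1))
  rw [mul_comm (R (Ioc z z')) (P (Ioc y z))]
  exact this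

/-! ### the candidate density -/

def Tset (Qs : Measure ℝ) : Set ℝ := {y | ∃ x, x < y ∧ Qs (Ioc x y) = 0}

def Tset' (Qs : Measure ℝ) : Set ℝ := {y | ∃ z, y < z ∧ Qs (Ioc y z) = 0}

def alphat (Q0 Qs : Measure ℝ) (y : ℝ) : ℝ≥0∞ :=
  ⨅ q : ℚ, if (q : ℝ) < y then Q0 (Ioc (q : ℝ) y) / Qs (Ioc (q : ℝ) y) else ⊤

def betat (Q1 Qs : Measure ℝ) (y : ℝ) : ℝ≥0∞ :=
  ⨆ q : ℚ, if (q : ℝ) < y then Q1 (Ioc (q : ℝ) y) / Qs (Ioc (q : ℝ) y) else 0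

open scoped Classical in
def gfun (Q0 Qs Q1 : Measure ℝ) (l0 l1 : ℝ≥0∞) (y : ℝ) : ℝ≥0∞ :=
  if y ∈ Tset Qs then 0 else (l0 * alphat Q0 Qs y + l1 * betat Q1 Qs y)⁻¹

def gplus (Q0 Qs Q1 : Measure ℝ) (l0 l1 : ℝ≥0∞) (y : ℝ) : ℝ≥0∞ :=
  (l0 * sSup ((fun z => Q0 (Ioc y z) / Qs (Ioc y z)) '' Ioi y)
    + l1 * sInf ((fun z => Q1 (Ioc y z) / Qs (Ioc y z)) '' Ioi y))⁻¹

lemma not_mem_Tset_iff {Qs : Measure ℝ} {y : ℝ} :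
    y ∉ Tset Qs ↔ ∀ x ∈ Iio y, Qs (Ioc x y) ≠ 0 := by
  simp only [Tset, mem_setOf_eq, not_exists, not_and, mem_Iio]

lemma not_mem_Tset'_iff {Qs : Measure ℝ} {y : ℝ} :
    y ∉ Tset' Qs ↔ ∀ z ∈ Ioi y, Qs (Ioc y z) ≠ 0 := by
  simp only [Tset', mem_setOf_eq, not_exists, not_and, mem_Ioi]

lemma alphat_eq_sInf {Q0 Qs : Measure ℝ} {y : ℝ}
    (ha : AntitoneOn (fun x => Q0 (Ioc x y) / Qs (Ioc x y)) (Iio y)) :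
    sInf ((fun x => Q0 (Ioc x y) / Qs (Ioc x y)) '' Iio y) = alphat Q0 Qs y := by
  rw [alphat]
  apply le_antisymm
  · refine le_iInf fun q => ?_
    split_ifs with hq
    · exact sInf_le ⟨(q : ℝ), hq, rfl⟩
    · exact le_top
  · refine le_sInf ?_
    rintro _ ⟨x, hx, rfl⟩
    obtain ⟨q, hq1, hq2⟩ := exists_rat_btwn (show x < y from hx)
    calc (⨅ q : ℚ, if (q : ℝ) < y then Q0 (Ioc (q : ℝ) y) / Qs (Ioc (q : ℝ) y) else ⊤) ≤ if (q : ℝ) < y then Q0 (Ioc (q : ℝ) y) / Qs (Ioc (q : ℝ) y) else ⊤ :=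
          iInf_le _ q
      _ = Q0 (Ioc (q : ℝ) y) / Qs (Ioc (q : ℝ) y) := if_pos hq2
      _ ≤ Q0 (Ioc x y) / Qs (Ioc x y) := ha hx hq2 (le_of_lt hq1)

lemma betat_eq_sSup {Q1 Qs : Measure ℝ} {y : ℝ}
    (hb : MonotoneOn (fun x => Q1 (Ioc x y) / Qs (Ioc x y)) (Iio y)) :
    sSup ((fun x => Q1 (Ioc x y) / Qs (Ioc x y)) '' Iio y) = betat Q1 Qs y := by
  rw [betat]
  apply le_antisymm
  · refine sSup_le ?_
    rintro _ ⟨x, hx, rfl⟩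
    obtain ⟨q, hq1, hq2⟩ := exists_rat_btwn (show x < y from hx)
    calc Q1 (Ioc x y) / Qs (Ioc x y) ≤ Q1 (Ioc (q : ℝ) y) / Qs (Ioc (q : ℝ) y) :=
          hb hx hq2 (le_of_lt hq1)
      _ = if (q : ℝ) < y then Q1 (Ioc (q : ℝ) y) / Qs (Ioc (q : ℝ) y) else 0 := (if_pos hq2).symm
      _ ≤ ⨆ q : ℚ, if (q : ℝ) < y then Q1 (Ioc (q : ℝ) y) / Qs (Ioc (q : ℝ) y) else 0 :=
          le_iSup (fun q : ℚ => if (q : ℝ) < y then Q1 (Ioc (q : ℝ) y) / Qs (Ioc (q : ℝ) y) else 0) q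
  · refine iSup_le fun q => ?_
    split_ifs with hq
    · exact le_sSup ⟨(q : ℝ), hq, rfl⟩
    · exact zero_le

lemma Q_apply (Q0 Q1 : Measure ℝ) (l0 l1 : ℝ≥0∞) (s : Set ℝ) :
    (l0 • Q0 + l1 • Q1) s = l0 * Q0 s + l1 * Q1 s := by
  simp [Measure.add_apply, Measure.smul_apply, smul_eq_mul]

/-- The key algebraic identity for the ratio. -/
lemma ratio_eq_inv {Q0 Qs Q1 : Measure ℝ} [IsFiniteMeasure Qs] {l0 l1 : ℝ≥0∞} {s : Set ℝ}
    (hS : Qs s ≠ 0) :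
    Qs s / (l0 • Q0 + l1 • Q1) s
      = (l0 * (Q0 s / Qs s) + l1 * (Q1 s / Qs s))⁻¹ := by
  rw [← mul_div_assoc, ← mul_div_assoc, ENNReal.div_add_div_same,
    ENNReal.inv_div (Or.inl (measure_ne_top Qs s)) (Or.inl hS), Q_apply]

/-- Main left-limit statement. -/
lemma tendsto_gfun (Q0 Qs Q1 : Measure ℝ) [IsFiniteMeasure Q0] [IsFiniteMeasure Qs]
    [IsFiniteMeasure Q1] (h0s : LikelihoodRatioLE Q0 Qs) (hs1 : LikelihoodRatioLE Qs Q1)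
    {l0 l1 : ℝ≥0∞} (hl0t : l0 ≠ ⊤) (hl1t : l1 ≠ ⊤) (y : ℝ) :
    Tendsto (fun x => Qs (Ioc x y) / (l0 • Q0 + l1 • Q1) (Ioc x y)) (𝓝[<] y)
      (𝓝 (gfun Q0 Qs Q1 l0 l1 y)) := by
  by_cases hy : y ∈ Tset Qs
  · simp only [gfun, if_pos hy]
    obtain ⟨x0, hx0lt, hQs0⟩ := hy
    have hmem : Ioo x0 y ∈ 𝓝[<] y := Ioo_mem_nhdsLT hx0lt
    refine Tendsto.congr' ?_ tendsto_const_nhds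
    filter_upwards [hmem] with x hx
    have : Qs (Ioc x y) = 0 :=
      le_antisymm (le_trans (measure_mono (Ioc_subset_Ioc_left (le_of_lt hx.1)))
        (le_of_eq hQs0)) (zero_le)
    simp [this, ENNReal.zero_div]
  · have hy' : ∀ x ∈ Iio y, Qs (Ioc x y) ≠ 0 := not_mem_Tset_iff.1 hy
    have ha := ratio_lo_antitoneOn h0s y hy'
    have hb := ratio_hi_monotoneOn hs1 y hy'
    have t1 := ha.tendsto_nhdsLT (OrderBot.bddBelow _)
    have t2 := hb.tendsto_nhdsLT (OrderTop.bddAbove _)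
    have t3 := Filter.Tendsto.add (ENNReal.Tendsto.const_mul t1 (Or.inr hl0t))
      (ENNReal.Tendsto.const_mul t2 (Or.inr hl1t))
    have t4 := ENNReal.tendsto_inv_iff.2 t3
    simp only [gfun, if_neg hy]
    rw [← alphat_eq_sInf ha, ← betat_eq_sSup hb]
    refine Tendsto.congr' ?_ t4
    filter_upwards [self_mem_nhdsWithin] with x hx
    exact (ratio_eq_inv (hy' x hx)).symm

/-- Mirrored right-limit statement. -/
lemma tendsto_gplus (Q0 Qs Q1 : Measure ℝ) [IsFiniteMeasure Q0] [IsFiniteMeasure Qs]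
    [IsFiniteMeasure Q1] (h0s : LikelihoodRatioLE Q0 Qs) (hs1 : LikelihoodRatioLE Qs Q1)
    {l0 l1 : ℝ≥0∞} (hl0t : l0 ≠ ⊤) (hl1t : l1 ≠ ⊤) {y : ℝ} (hy : y ∉ Tset' Qs) :
    Tendsto (fun z => Qs (Ioc y z) / (l0 • Q0 + l1 • Q1) (Ioc y z)) (𝓝[>] y)
      (𝓝 (gplus Q0 Qs Q1 l0 l1 y)) := by
  have hy' : ∀ z ∈ Ioi y, Qs (Ioc y z) ≠ 0 := not_mem_Tset'_iff.1 hy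
  have ha := ratio_lo_antitoneOn' h0s y hy'
  have hb := ratio_hi_monotoneOn' hs1 y hy'
  have t1 := ha.tendsto_nhdsGT (OrderTop.bddAbove _)
  have t2 := hb.tendsto_nhdsGT (OrderBot.bddBelow _)
  have t3 := Filter.Tendsto.add (ENNReal.Tendsto.const_mul t1 (Or.inr hl0t))
    (ENNReal.Tendsto.const_mul t2 (Or.inr hl1t))
  have t4 := ENNReal.tendsto_inv_iff.2 t3
  refine Tendsto.congr' ?_ t4
  filter_upwards [self_mem_nhdsWithin] with z hz
  exact (ratio_eq_inv (hy' z hz)).symm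

/-! ### measurability -/

lemma measurable_measure_Ioc (P : Measure ℝ) (q : ℝ) :
    Measurable fun y => P (Ioc q y) :=
  Monotone.measurable (fun _ _ h => measure_mono (Ioc_subset_Ioc_right h))

lemma measurable_alphat (Q0 Qs : Measure ℝ) : Measurable (alphat Q0 Qs) := by
  refine Measurable.iInf fun q => ?_
  refine Measurable.ite measurableSet_Ioi ?_ measurable_const
  exact (measurable_measure_Ioc Q0 q).div (measurable_measure_Ioc Qs q)

lemma measurable_betat (Q1 Qs : Measure ℝ) : Measurable (betat Q1 Qs) := by
  refine Measurable.iSup fun q => ?_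
  refine Measurable.ite measurableSet_Ioi ?_ measurable_const
  exact (measurable_measure_Ioc Q1 q).div (measurable_measure_Ioc Qs q)

lemma Tset_eq (Qs : Measure ℝ) :
    Tset Qs = ⋃ q : ℚ, (Ioi (q : ℝ) ∩ {y | Qs (Ioc (q : ℝ) y) = 0}) := by
  ext y
  simp only [Tset, mem_setOf_eq, mem_iUnion, mem_inter_iff, mem_Ioi]
  constructor
  · rintro ⟨x, hx, h0⟩
    obtain ⟨q, hq1, hq2⟩ := exists_rat_btwn hx
    exact ⟨q, hq2, le_antisymm (le_trans (measure_mono (Ioc_subset_Ioc_left (le_of_lt hq1)))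
      (le_of_eq h0)) (zero_le)⟩
  · rintro ⟨q, hq, h0⟩
    exact ⟨(q : ℝ), hq, h0⟩

lemma measurableSet_Tset (Qs : Measure ℝ) : MeasurableSet (Tset Qs) := by
  rw [Tset_eq]
  refine MeasurableSet.iUnion fun q => ?_
  exact measurableSet_Ioi.inter ((measurable_measure_Ioc Qs q) (measurableSet_singleton 0))

lemma measurable_gfun (Q0 Qs Q1 : Measure ℝ) (l0 l1 : ℝ≥0∞) :
    Measurable (gfun Q0 Qs Q1 l0 l1) := by
  unfold gfun
  refine Measurable.ite (measurableSet_Tset Qs) measurable_const ?_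
  exact (((measurable_alphat Q0 Qs).const_mul l0).add
    ((measurable_betat Q1 Qs).const_mul l1)).inv

/-! ### the uniform lower bound -/

lemma eq_zero_of_frequently_le {u : ℕ → ℝ≥0∞} {x : ℝ≥0∞}
    (hfreq : ∃ᶠ n in atTop, x ≤ u n) (hu : Tendsto u atTop (𝓝 0)) : x = 0 := by
  by_contra hx
  have hev : ∀ᶠ n in atTop, u n < x := hu.eventually_lt_const (pos_iff_ne_zero.2 hx)
  obtain ⟨n, h1, h2⟩ := (hfreq.and_eventually hev).exists
  exact absurd (lt_of_le_of_lt h1 h2) (lt_irrefl x)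

lemma Ioi_eq_iUnion_Ici (c : ℝ) : Ioi c = ⋃ n : ℕ, Ici (c + ((n : ℝ) + 1)⁻¹) := by
  ext x
  simp only [mem_Ioi, mem_iUnion, mem_Ici]
  constructor
  · intro hx
    obtain ⟨n, hn⟩ := exists_nat_gt (x - c)⁻¹
    refine ⟨n, ?_⟩
    have hxc : 0 < x - c := sub_pos.2 hx
    have h1 : ((n : ℝ) + 1)⁻¹ < x - c := by
      rw [inv_lt_comm₀ (by positivity) hxc]
      exact lt_trans hn (lt_add_one _)
    linarith
  · rintro ⟨n, hn⟩
    have : (0 : ℝ) < ((n : ℝ) + 1)⁻¹ := by positivity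
    linarith

lemma Iio_eq_iUnion_Iic (c : ℝ) : Iio c = ⋃ n : ℕ, Iic (c - ((n : ℝ) + 1)⁻¹) := by
  ext x
  simp only [mem_Iio, mem_iUnion, mem_Iic]
  constructor
  · intro hx
    obtain ⟨n, hn⟩ := exists_nat_gt (c - x)⁻¹
    refine ⟨n, ?_⟩
    have hxc : 0 < c - x := sub_pos.2 hx
    have h1 : ((n : ℝ) + 1)⁻¹ < c - x := by
      rw [inv_lt_comm₀ (by positivity) hxc]
      exact lt_trans hn (lt_add_one _)
    linarith
  · rintro ⟨n, hn⟩
    have : (0 : ℝ) < ((n : ℝ) + 1)⁻¹ := by positivity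
    linarith

lemma exists_eps (Q0 Q1 : Measure ℝ) [IsProbabilityMeasure Q0] [IsProbabilityMeasure Q1]
    (hsupp : ∀ x : ℝ, 0 < Q0 (Ioi x) + Q1 (Iio x))
    {l0 l1 : ℝ≥0∞} (hl0 : 0 < l0) (hl1 : 0 < l1) (hl0t : l0 ≠ ⊤) (hl1t : l1 ≠ ⊤) :
    ∃ ε : ℝ≥0∞, 0 < ε ∧ ∀ y : ℝ, ε ≤ l0 * Q0 (Ioi y) + l1 * Q1 (Iio y) := by
  by_contra hcon
  push_neg at hcon
  set m : ℝ → ℝ≥0∞ := fun y => l0 * Q0 (Ioi y) + l1 * Q1 (Iio y) with hm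
  choose Y hY using fun n : ℕ =>
    hcon (((n : ℝ≥0∞) + 1)⁻¹) (ENNReal.inv_pos.2 (by simp [ENNReal.add_eq_top]))
  -- m (Y n) → 0
  have hinv : Tendsto (fun n : ℕ => ((n : ℝ≥0∞) + 1)⁻¹) atTop (𝓝 0) :=
    tendsto_of_tendsto_of_tendsto_of_le_of_le tendsto_const_nhds
      ENNReal.tendsto_inv_nat_nhds_zero (fun n => zero_le)
      (fun n => ENNReal.inv_le_inv' le_self_add)
  have hm0 : Tendsto (fun n => m (Y n)) atTop (𝓝 0) :=
    tendsto_of_tendsto_of_tendsto_of_le_of_le tendsto_const_nhds hinv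
      (fun n => zero_le) (fun n => (hY n).le)
  -- two components tend to zero
  have hcomp : ∀ n, Q0 (Ioi (Y n)) ≤ l0⁻¹ * m (Y n) := by
    intro n
    calc Q0 (Ioi (Y n)) = l0⁻¹ * (l0 * Q0 (Ioi (Y n))) := by
          rw [← mul_assoc, ENNReal.inv_mul_cancel hl0.ne' hl0t, one_mul]
      _ ≤ l0⁻¹ * m (Y n) := mul_le_mul_right le_self_add _
  have hcomp1 : ∀ n, Q1 (Iio (Y n)) ≤ l1⁻¹ * m (Y n) := by
    intro n
    calc Q1 (Iio (Y n)) = l1⁻¹ * (l1 * Q1 (Iio (Y n))) := by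
          rw [← mul_assoc, ENNReal.inv_mul_cancel hl1.ne' hl1t, one_mul]
      _ ≤ l1⁻¹ * m (Y n) := mul_le_mul_right le_add_self _
  have hF : Tendsto (fun n => Q0 (Ioi (Y n))) atTop (𝓝 0) := by
    have := ENNReal.Tendsto.const_mul hm0 (Or.inr (ENNReal.inv_ne_top.2 hl0.ne'))
    rw [mul_zero] at this
    exact tendsto_of_tendsto_of_tendsto_of_le_of_le tendsto_const_nhds this
      (fun n => zero_le) hcomp
  have hG : Tendsto (fun n => Q1 (Iio (Y n))) atTop (𝓝 0) := by
    have := ENNReal.Tendsto.const_mul hm0 (Or.inr (ENNReal.inv_ne_top.2 hl1.ne'))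
    rw [mul_zero] at this
    exact tendsto_of_tendsto_of_tendsto_of_le_of_le tendsto_const_nhds this
      (fun n => zero_le) hcomp1
  -- positivity somewhere
  obtain ⟨a, ha⟩ : ∃ a : ℝ, 0 < Q1 (Iio a) := by
    by_contra hc
    push_neg at hc
    have h0 : Q1 (⋃ n : ℕ, Iio (n : ℝ)) = 0 :=
      measure_iUnion_null fun n => le_antisymm (hc _) (zero_le)
    have huniv : Q1 (univ : Set ℝ) = 0 := by
      refine le_antisymm ?_ (zero_le)
      rw [← h0]
      refine measure_mono fun x _ => ?_
      obtain ⟨n, hn⟩ := exists_nat_gt x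
      exact mem_iUnion.2 ⟨n, hn⟩
    simp [measure_univ] at huniv
  obtain ⟨b, hb⟩ : ∃ b : ℝ, 0 < Q0 (Ioi b) := by
    by_contra hc
    push_neg at hc
    have h0 : Q0 (⋃ n : ℕ, Ioi (-(n : ℝ))) = 0 :=
      measure_iUnion_null fun n => le_antisymm (hc _) (zero_le)
    have huniv : Q0 (univ : Set ℝ) = 0 := by
      refine le_antisymm ?_ (zero_le)
      rw [← h0]
      refine measure_mono fun x _ => ?_
      obtain ⟨n, hn⟩ := exists_nat_gt (-x)
      exact mem_iUnion.2 ⟨n, by simpa using neg_lt.1 hn⟩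
    simp [measure_univ] at huniv
  have hmin : 0 < min (l0 * Q0 (Ioi b)) (l1 * Q1 (Iio a)) :=
    lt_min (ENNReal.mul_pos hl0.ne' hb.ne') (ENNReal.mul_pos hl1.ne' ha.ne')
  have hev : ∀ᶠ n in atTop, m (Y n) < min (l0 * Q0 (Ioi b)) (l1 * Q1 (Iio a)) :=
    hm0.eventually_lt_const hmin
  have hbound : ∀ᶠ n in atTop, Y n ∈ Icc b a := by
    filter_upwards [hev] with n hn
    constructor
    · by_contra hby
      push_neg at hby
      have : l0 * Q0 (Ioi b) ≤ m (Y n) :=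
        le_trans (mul_le_mul_right (measure_mono (Ioi_subset_Ioi (le_of_lt hby))) l0) le_self_add
      exact absurd (lt_of_le_of_lt this hn) (not_lt.2 (min_le_left _ _))
    · by_contra hby
      push_neg at hby
      have : l1 * Q1 (Iio a) ≤ m (Y n) :=
        le_trans (mul_le_mul_right (measure_mono (Iio_subset_Iio (le_of_lt hby))) l1) le_add_self
      exact absurd (lt_of_le_of_lt this hn) (not_lt.2 (min_le_right _ _))
  obtain ⟨N, hN⟩ := eventually_atTop.1 hbound
  obtain ⟨c, hc_mem, φ, hφ, hWc⟩ := tendsto_subseq_of_bounded (Metric.isBounded_Icc b a)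
    (fun n => hN (n + N) (le_add_self))
  set W : ℕ → ℝ := fun n => Y (φ n + N) with hWdef
  have hWtend : Tendsto W atTop (𝓝 c) := hWc
  have hidx : Tendsto (fun n => φ n + N) atTop atTop :=
    (tendsto_add_atTop_nat N).comp hφ.tendsto_atTop
  have hFW : Tendsto (fun n => Q0 (Ioi (W n))) atTop (𝓝 0) := hF.comp hidx
  have hGW : Tendsto (fun n => Q1 (Iio (W n))) atTop (𝓝 0) := hG.comp hidx
  -- dichotomy
  have hdich : (∃ᶠ n in atTop, W n ≤ c) ∨ (∃ᶠ n in atTop, c ≤ W n) := by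
    by_cases h1 : ∃ᶠ n in atTop, W n ≤ c
    · exact Or.inl h1
    · right
      have : ∀ᶠ n in atTop, c < W n := by
        have := not_frequently.1 h1
        filter_upwards [this] with n hn
        exact lt_of_not_ge hn
      exact (this.mono fun n hn => le_of_lt hn).frequently
  have hzero : Q0 (Ioi c) = 0 ∧ Q1 (Iio c) = 0 := by
    rcases hdich with hfr | hfr
    · constructor
      · -- W n ≤ c frequently : Ioi c ⊆ Ioi (W n)
        refine eq_zero_of_frequently_le ?_ hFW
        exact hfr.mono fun n hn => measure_mono (Ioi_subset_Ioi hn)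
      · -- left-continuity of Iio at c
        rw [Iio_eq_iUnion_Iic c]
        refine measure_iUnion_null fun n => ?_
        refine eq_zero_of_frequently_le ?_ hGW
        have hev2 : ∀ᶠ k in atTop, c - ((n : ℝ) + 1)⁻¹ < W k := by
          refine hWtend.eventually_const_lt ?_
          have : (0 : ℝ) < ((n : ℝ) + 1)⁻¹ := by positivity
          linarith
        exact (hev2.mono fun k hk =>
          measure_mono fun x hx => lt_of_le_of_lt hx hk).frequently
    · constructor
      · rw [Ioi_eq_iUnion_Ici c]
        refine measure_iUnion_null fun n => ?_
        refine eq_zero_of_frequently_le ?_ hFW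
        have hev2 : ∀ᶠ k in atTop, W k < c + ((n : ℝ) + 1)⁻¹ := by
          refine hWtend.eventually_lt_const ?_
          have : (0 : ℝ) < ((n : ℝ) + 1)⁻¹ := by positivity
          linarith
        exact (hev2.mono fun k hk =>
          measure_mono fun x hx => lt_of_lt_of_le hk hx).frequently
      · refine eq_zero_of_frequently_le ?_ hGW
        exact hfr.mono fun n hn => measure_mono (Iio_subset_Iio hn)
  have := hsupp c
  rw [hzero.1, hzero.2] at this
  simp at this

/-! ### lower bounds for the denominator, hence boundedness of `g` -/

lemma le_self_div_prob {Qs : Measure ℝ} [IsProbabilityMeasure Qs] (a : ℝ≥0∞) (s : Set ℝ) :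
    a ≤ a / Qs s := by
  have h := ENNReal.div_le_div (le_refl a) (prob_le_one (μ := Qs) (s := s))
  simpa using h

lemma alphat_ge {Q0 Qs : Measure ℝ} [IsProbabilityMeasure Q0] [IsProbabilityMeasure Qs]
    (h0s : LikelihoodRatioLE Q0 Qs) {y : ℝ} (hy : y ∉ Tset Qs) :
    Q0 (Ioi y) ≤ alphat Q0 Qs y := by
  have hy' := not_mem_Tset_iff.1 hy
  rw [alphat]
  refine le_iInf fun q => ?_
  split_ifs with hq
  swap
  · exact le_top
  have hIoi : Ioi y = ⋃ n : ℕ, Ioc y (y + n + 1) := by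
    ext x
    simp only [mem_Ioi, mem_iUnion, mem_Ioc]
    constructor
    · intro hx
      obtain ⟨n, hn⟩ := exists_nat_gt (x - y)
      exact ⟨n, hx, by linarith⟩
    · rintro ⟨n, hn, _⟩
      exact hn
  rw [hIoi, Directed.measure_iUnion
    ((monotone_nat_of_le_succ (fun n => Ioc_subset_Ioc_right (by push_cast; linarith))).directed_le)]
  refine iSup_le fun n => ?_
  calc Q0 (Ioc y (y + n + 1)) ≤ Q0 (Ioc y (y + n + 1)) / Qs (Ioc y (y + n + 1)) :=
        le_self_div_prob _ _
    _ ≤ Q0 (Ioc (q : ℝ) y) / Qs (Ioc (q : ℝ) y) := by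
        refine ratio_le_ratio h0s measurableSet_Ioc measurableSet_Ioc ?_ (hy' _ hq)
        intro p hp r hr
        exact le_trans hp.2 (le_of_lt hr.1)

lemma betat_ge {Q1 Qs : Measure ℝ} [IsProbabilityMeasure Q1] [IsProbabilityMeasure Qs]
    (hs1 : LikelihoodRatioLE Qs Q1) {y : ℝ} (hy : y ∉ Tset Qs) :
    Q1 (Iio y) ≤ betat Q1 Qs y := by
  have hy' := not_mem_Tset_iff.1 hy
  have key : ∀ z z' : ℝ, z' < y → Q1 (Ioc z z') ≤ betat Q1 Qs y := by
    intro z z' hz'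
    obtain ⟨q, hq1, hq2⟩ := exists_rat_btwn hz'
    calc Q1 (Ioc z z') ≤ Q1 (Ioc z z') / Qs (Ioc z z') := le_self_div_prob _ _
      _ ≤ Q1 (Ioc (q : ℝ) y) / Qs (Ioc (q : ℝ) y) := by
          refine ratio_ge_ratio hs1 measurableSet_Ioc measurableSet_Ioc ?_ (hy' _ hq2)
          intro p hp r hr
          exact le_trans hp.2 (le_of_lt (lt_of_lt_of_le hq1 (le_of_lt hr.1)))
      _ = if (q : ℝ) < y then Q1 (Ioc (q : ℝ) y) / Qs (Ioc (q : ℝ) y) else 0 := (if_pos hq2).symm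
      _ ≤ betat Q1 Qs y := by
          rw [betat]
          exact le_iSup (fun q : ℚ => if (q : ℝ) < y then Q1 (Ioc (q : ℝ) y) / Qs (Ioc (q : ℝ) y)
            else 0) q
  have hIio : Iio y = ⋃ n : ℕ, Ioc (y - n - 1) (y - ((n : ℝ) + 1)⁻¹) := by
    ext x
    simp only [mem_Iio, mem_iUnion, mem_Ioc]
    constructor
    · intro hx
      obtain ⟨n, hn⟩ := exists_nat_gt (max (y - x) (y - x)⁻¹)
      rw [max_lt_iff] at hn
      have hyx : 0 < y - x := by linarith
      refine ⟨n, by linarith [hn.1], ?_⟩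
      have : ((n : ℝ) + 1)⁻¹ < y - x := by
        rw [inv_lt_comm₀ (by positivity) hyx]
        exact lt_trans hn.2 (lt_add_one _)
      linarith
    · rintro ⟨n, _, hn2⟩
      have : (0 : ℝ) < ((n : ℝ) + 1)⁻¹ := by positivity
      linarith
  rw [hIio, Directed.measure_iUnion]
  · refine iSup_le fun n => ?_
    refine key _ _ ?_
    have : (0 : ℝ) < ((n : ℝ) + 1)⁻¹ := by positivity
    linarith
  · refine (monotone_nat_of_le_succ (fun n => Ioc_subset_Ioc ?_ ?_)).directed_le
    · push_cast; linarith
    · have h1 : ((n : ℝ) + 1 + 1)⁻¹ ≤ ((n : ℝ) + 1)⁻¹ := by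
        apply inv_anti₀ (by positivity) (by linarith)
      push_cast; linarith

lemma gfun_le {Q0 Qs Q1 : Measure ℝ} [IsProbabilityMeasure Q0] [IsProbabilityMeasure Qs]
    [IsProbabilityMeasure Q1] (h0s : LikelihoodRatioLE Q0 Qs) (hs1 : LikelihoodRatioLE Qs Q1)
    {l0 l1 : ℝ≥0∞} {ε : ℝ≥0∞} (hε : ∀ y : ℝ, ε ≤ l0 * Q0 (Ioi y) + l1 * Q1 (Iio y)) :
    ∀ y : ℝ, gfun Q0 Qs Q1 l0 l1 y ≤ ε⁻¹ := by
  intro y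
  rw [gfun]
  split_ifs with hy
  · exact zero_le
  · refine ENNReal.inv_le_inv' ?_
    calc ε ≤ l0 * Q0 (Ioi y) + l1 * Q1 (Iio y) := hε y
      _ ≤ l0 * alphat Q0 Qs y + l1 * betat Q1 Qs y :=
          add_le_add (mul_le_mul_right (alphat_ge h0s hy) l0)
            (mul_le_mul_right (betat_ge hs1 hy) l1)

/-! ### absolute continuity of `Qs` w.r.t. `Q` -/

lemma Qs_null_of_null {Q0 Qs Q1 : Measure ℝ} [IsProbabilityMeasure Q0] [IsProbabilityMeasure Qs]
    [IsProbabilityMeasure Q1] (h0s : LikelihoodRatioLE Q0 Qs) (hs1 : LikelihoodRatioLE Qs Q1)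
    (hsupp : ∀ x : ℝ, 0 < Q0 (Ioi x) + Q1 (Iio x))
    {N : Set ℝ} (hN : MeasurableSet N) (h0 : Q0 N = 0) (h1 : Q1 N = 0) : Qs N = 0 := by
  by_contra hQsN
  obtain ⟨μ0, f0, fs, hσ0, hP0, hPs, hm0⟩ := h0s
  obtain ⟨μ1, gs, g1, hσ1, hQs1, hQ11, hm1⟩ := hs1
  -- the four "bad" subsets of N are Qs-null
  have hb1 : Qs ({x | f0 x ≠ 0} ∩ N) = 0 := by
    have hf0 : ∀ᵐ x ∂μ0, x ∈ N → f0 x = 0 :=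
      (setLIntegral_eq_zero_iff hN hP0.1).1 (by rw [← hP0.2 N hN]; exact h0)
    refine hPs.absCont (measure_mono_null ?_ (ae_iff.1 hf0))
    rintro x ⟨hx1, hx2⟩
    exact fun h => hx1 (h hx2)
  have hb2 : Qs ({x | g1 x ≠ 0} ∩ N) = 0 := by
    have hg1 : ∀ᵐ x ∂μ1, x ∈ N → g1 x = 0 :=
      (setLIntegral_eq_zero_iff hN hQ11.1).1 (by rw [← hQ11.2 N hN]; exact h1)
    refine hQs1.absCont (measure_mono_null ?_ (ae_iff.1 hg1))
    rintro x ⟨hx1, hx2⟩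
    exact fun h => hx1 (h hx2)
  have hb3 : Qs {x | fs x = 0} = 0 := by
    show Qs (fs ⁻¹' {0}) = 0
    rw [hPs.2 _ (hPs.1 (measurableSet_singleton 0))]
    rw [setLIntegral_eq_zero_iff (hPs.1 (measurableSet_singleton 0)) hPs.1]
    exact Filter.Eventually.of_forall fun x hx => hx
  have hb4 : Qs {x | gs x = 0} = 0 := by
    show Qs (gs ⁻¹' {0}) = 0
    rw [hQs1.2 _ (hQs1.1 (measurableSet_singleton 0))]
    rw [setLIntegral_eq_zero_iff (hQs1.1 (measurableSet_singleton 0)) hQs1.1]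
    exact Filter.Eventually.of_forall fun x hx => hx
  -- there is a "good" point of N
  set G : Set ℝ := {x | f0 x = 0 ∧ fs x ≠ 0 ∧ g1 x = 0 ∧ gs x ≠ 0} with hG
  have hNG : N \ G ⊆ ({x | f0 x ≠ 0} ∩ N) ∪ {x | fs x = 0} ∪ ({x | g1 x ≠ 0} ∩ N)
      ∪ {x | gs x = 0} := by
    rintro x ⟨hxN, hxG⟩
    simp only [hG, mem_setOf_eq, not_and_or, not_not] at hxG
    rcases hxG with h | h | h | h
    · exact Or.inl (Or.inl (Or.inl ⟨h, hxN⟩))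
    · exact Or.inl (Or.inl (Or.inr h))
    · exact Or.inl (Or.inr ⟨h, hxN⟩)
    · exact Or.inr h
  have hndiff : Qs (N \ G) = 0 :=
    measure_mono_null hNG (by
      refine measure_union_null (measure_union_null (measure_union_null hb1 hb3) hb2) hb4)
  have hNGpos : Qs (N ∩ G) ≠ 0 := by
    intro hng
    refine hQsN (le_antisymm ?_ (zero_le))
    calc Qs N ≤ Qs ((N ∩ G) ∪ (N \ G)) := measure_mono (fun x hx => by
            by_cases hxG : x ∈ G
            · exact Or.inl ⟨hx, hxG⟩
            · exact Or.inr ⟨hx, hxG⟩)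
      _ ≤ Qs (N ∩ G) + Qs (N \ G) := measure_union_le _ _
      _ = 0 := by rw [hng, hndiff, add_zero]
  obtain ⟨c, hcN, hcG⟩ := nonempty_of_measure_ne_zero hNGpos
  obtain ⟨hf0c, hfsc, hg1c, hgsc⟩ := hcG
  -- Q0 vanishes on [c, ∞)
  have hQ0 : Q0 (Ici c) = 0 := by
    rw [hP0.2 _ measurableSet_Ici]
    rw [setLIntegral_eq_zero_iff measurableSet_Ici hP0.1]
    filter_upwards [hPs.ae_lt_top] with x hfsx
    intro hx
    by_cases hpos : 0 < f0 x + fs x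
    · have hposc : 0 < f0 c + fs c := by
        rw [hf0c, zero_add]
        exact pos_iff_ne_zero.2 hfsc
      have h := hm0 c x hx hposc hpos
      rw [hf0c, ENNReal.div_zero hfsc] at h
      by_contra hf0x
      exact absurd (top_le_iff.1 h) (ENNReal.div_lt_top hfsx.ne hf0x).ne
    · simp only [not_lt, nonpos_iff_eq_zero, add_eq_zero] at hpos
      exact hpos.1
  -- Q1 vanishes on (-∞, c]
  have hQ1 : Q1 (Iic c) = 0 := by
    rw [hQ11.2 _ measurableSet_Iic]
    rw [setLIntegral_eq_zero_iff measurableSet_Iic hQ11.1]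
    filter_upwards [hQs1.ae_lt_top] with x hgsx
    intro hx
    by_cases hpos : 0 < gs x + g1 x
    · have hposc : 0 < gs c + g1 c := by
        rw [hg1c, add_zero]
        exact pos_iff_ne_zero.2 hgsc
      have h := hm1 x c hx hpos hposc
      rw [hg1c, ENNReal.zero_div] at h
      have h0 : g1 x / gs x = 0 := le_antisymm h (zero_le)
      rcases ENNReal.div_eq_zero_iff.1 h0 with h' | h'
      · exact h'
      · exact absurd h' hgsx.ne
    · simp only [not_lt, nonpos_iff_eq_zero, add_eq_zero] at hpos
      exact hpos.2
  have := hsupp c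
  have e0 : Q0 (Ioi c) = 0 := measure_mono_null Ioi_subset_Ici_self hQ0
  have e1 : Q1 (Iio c) = 0 := measure_mono_null Iio_subset_Iic_self hQ1
  rw [e0, e1] at this
  simp at this

lemma Qs_ac {Q0 Qs Q1 : Measure ℝ} [IsProbabilityMeasure Q0] [IsProbabilityMeasure Qs]
    [IsProbabilityMeasure Q1] (h0s : LikelihoodRatioLE Q0 Qs) (hs1 : LikelihoodRatioLE Qs Q1)
    (hsupp : ∀ x : ℝ, 0 < Q0 (Ioi x) + Q1 (Iio x))
    {l0 l1 : ℝ≥0∞} (hl0 : l0 ≠ 0) (hl1 : l1 ≠ 0) : Qs ≪ (l0 • Q0 + l1 • Q1) := by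
  refine Measure.AbsolutelyContinuous.mk fun s hs hs0 => ?_
  rw [Q_apply] at hs0
  rw [add_eq_zero] at hs0
  have h0 : Q0 s = 0 := by
    rcases mul_eq_zero.1 hs0.1 with h | h
    · exact absurd h hl0
    · exact h
  have h1 : Q1 s = 0 := by
    rcases mul_eq_zero.1 hs0.2 with h | h
    · exact absurd h hl1
    · exact h
  exact Qs_null_of_null h0s hs1 hsupp hs h0 h1

/-! ### the degenerate sets are small -/

lemma Ioi_eq_iUnion_Ioc (y : ℝ) : Ioi y = ⋃ n : ℕ, Ioc y (y + n + 1) := by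
  ext x
  simp only [mem_Ioi, mem_iUnion, mem_Ioc]
  constructor
  · intro hx
    obtain ⟨n, hn⟩ := exists_nat_gt (x - y)
    exact ⟨n, hx, by linarith⟩
  · rintro ⟨n, hn, _⟩
    exact hn

lemma Qs_Tset_null (Qs : Measure ℝ) : Qs (Tset Qs) = 0 := by
  rw [Tset_eq]
  refine measure_iUnion_null fun q => ?_
  set E := Ioi (q : ℝ) ∩ {y | Qs (Ioc (q : ℝ) y) = 0} with hE
  by_cases hne : E.Nonempty
  swap
  · rw [not_nonempty_iff_eq_empty.1 hne]; exact measure_empty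
  by_cases hbdd : BddAbove E
  · set u := sSup E with hu
    by_cases hzero : Qs (Ioc (q : ℝ) u) = 0
    · refine measure_mono_null (fun y hy => ?_) hzero
      exact mem_Ioc.2 ⟨hy.1, le_csSup hbdd hy⟩
    · have hEsub : E ⊆ Ioo (q : ℝ) u := by
        intro y hy
        refine ⟨hy.1, lt_of_le_of_ne (le_csSup hbdd hy) ?_⟩
        intro heq
        exact hzero (heq ▸ hy.2)
      refine measure_mono_null hEsub ?_
      have hsub : Ioo (q : ℝ) u ⊆ ⋃ n : ℕ, Ioc (q : ℝ) (u - ((n : ℝ) + 1)⁻¹) := by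
        intro x hx
        obtain ⟨n, hn⟩ := exists_nat_gt (u - x)⁻¹
        have hux : 0 < u - x := sub_pos.2 hx.2
        have h1 : ((n : ℝ) + 1)⁻¹ < u - x := by
          rw [inv_lt_comm₀ (by positivity) hux]
          exact lt_trans hn (lt_add_one _)
        simp only [mem_iUnion, mem_Ioc]
        exact ⟨n, hx.1, by linarith⟩
      refine measure_mono_null hsub (measure_iUnion_null fun n => ?_)
      obtain ⟨y, hyE, hy⟩ := exists_lt_of_lt_csSup hne
        (show u - ((n : ℝ) + 1)⁻¹ < u by
          have : (0 : ℝ) < ((n : ℝ) + 1)⁻¹ := by positivity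
          linarith)
      exact measure_mono_null (Ioc_subset_Ioc_right (le_of_lt hy)) hyE.2
  · have hIoi : Qs (Ioi (q : ℝ)) = 0 := by
      rw [Ioi_eq_iUnion_Ioc]
      refine measure_iUnion_null fun n => ?_
      obtain ⟨y, hyE, hy⟩ := not_bddAbove_iff.1 hbdd ((q : ℝ) + n + 1)
      exact measure_mono_null (Ioc_subset_Ioc_right (le_of_lt hy)) hyE.2
    exact measure_mono_null inter_subset_left hIoi

lemma Tset'_eq (Qs : Measure ℝ) :
    Tset' Qs = ⋃ q : ℚ, (Iio (q : ℝ) ∩ {y | Qs (Ioc y (q : ℝ)) = 0}) := by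
  ext y
  simp only [Tset', mem_setOf_eq, mem_iUnion, mem_inter_iff, mem_Iio]
  constructor
  · rintro ⟨z, hz, h0⟩
    obtain ⟨q, hq1, hq2⟩ := exists_rat_btwn hz
    exact ⟨q, hq1, le_antisymm (le_trans (measure_mono (Ioc_subset_Ioc_right (le_of_lt hq2)))
      (le_of_eq h0)) (zero_le)⟩
  · rintro ⟨q, hq, h0⟩
    exact ⟨(q : ℝ), hq, h0⟩

lemma Tset'_diff_countable (Qs : Measure ℝ) : (Tset' Qs \ Tset Qs).Countable := by
  have hsub : Tset' Qs \ Tset Qs ⊆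
      ⋃ q : ℚ, ((Iio (q : ℝ) ∩ {y | Qs (Ioc y (q : ℝ)) = 0}) \ Tset Qs) := by
    intro y hy
    have := (Tset'_eq Qs) ▸ hy.1
    obtain ⟨s, ⟨q, rfl⟩, hs⟩ := this
    exact mem_iUnion.2 ⟨q, hs, hy.2⟩
  refine Set.Countable.mono hsub (countable_iUnion fun q => ?_)
  refine Set.Subsingleton.countable ?_
  intro y1 h1 y2 h2
  by_contra hne
  rcases lt_or_gt_of_ne hne with h | h
  · exact h2.2 ⟨y1, h, le_antisymm (le_trans (measure_mono
      (Ioc_subset_Ioc_right (le_of_lt h2.1.1))) (le_of_eq h1.1.2)) (zero_le)⟩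
  · exact h1.2 ⟨y2, h, le_antisymm (le_trans (measure_mono
      (Ioc_subset_Ioc_right (le_of_lt h1.1.1))) (le_of_eq h2.1.2)) (zero_le)⟩

lemma atoms_countable (Q : Measure ℝ) [IsFiniteMeasure Q] : {y : ℝ | Q {y} ≠ 0}.Countable := by
  have h := Measure.countable_meas_pos_of_disjoint_iUnion₀ (μ := Q)
    (As := fun y : ℝ => ({y} : Set ℝ))
    (fun y => (measurableSet_singleton y).nullMeasurableSet)
    (fun y z hyz => Disjoint.aedisjoint (by simp [Function.onFun, hyz]))
  refine h.mono fun y hy => ?_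
  exact pos_iff_ne_zero.2 hy

/-! ### one-sided limits agree off a countable set -/

lemma exists_rat_btwn_ennreal {a b : ℝ≥0∞} (hab : a < b) :
    ∃ q : ℚ, a < ENNReal.ofReal q ∧ ENNReal.ofReal q < b := by
  have ha : a ≠ ⊤ := hab.ne_top
  by_cases hb : b = ⊤
  · obtain ⟨q, hq⟩ := exists_rat_gt a.toReal
    refine ⟨q, ?_, ?_⟩
    · rwa [ENNReal.lt_ofReal_iff_toReal_lt ha]
    · rw [hb]; exact ENNReal.ofReal_lt_top
  · have h1 : a.toReal < b.toReal := (ENNReal.toReal_lt_toReal ha hb).2 hab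
    obtain ⟨q, hq1, hq2⟩ := exists_rat_btwn h1
    refine ⟨q, ?_, ?_⟩
    · rwa [ENNReal.lt_ofReal_iff_toReal_lt ha]
    · rw [ENNReal.ofReal_lt_iff_lt_toReal (le_of_lt (lt_of_le_of_lt ENNReal.toReal_nonneg hq1)) hb]
      exact hq2

lemma countable_of_ordered_gaps {J : Set ℝ} {lo hi : ℝ → ℝ≥0∞}
    (hlh : ∀ y ∈ J, lo y < hi y)
    (horder : ∀ y ∈ J, ∀ y' ∈ J, y < y' → hi y' ≤ lo y) : J.Countable := by
  have hch : ∀ y ∈ J, ∃ q : ℚ, lo y < ENNReal.ofReal q ∧ ENNReal.ofReal q < hi y := by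
    intro y hy
    exact exists_rat_btwn_ennreal (hlh y hy)
  classical
  choose! F hF1 hF2 using hch
  have hinj : InjOn F J := by
    intro y hy y' hy' heq
    by_contra hne
    rcases lt_or_gt_of_ne hne with h | h
    · have h1 : ENNReal.ofReal (F y') < ENNReal.ofReal (F y) :=
        lt_of_lt_of_le (hF2 y' hy') (le_trans (horder y hy y' hy' h) (le_of_lt (hF1 y hy)))
      rw [heq] at h1
      exact absurd h1 (lt_irrefl _)
    · have h1 : ENNReal.ofReal (F y) < ENNReal.ofReal (F y') :=
        lt_of_lt_of_le (hF2 y hy) (le_trans (horder y' hy' y hy h) (le_of_lt (hF1 y' hy')))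
      rw [heq] at h1
      exact absurd h1 (lt_irrefl _)
  exact Set.countable_of_injective_of_countable_image hinj (Set.to_countable _)

lemma countable_of_ordered_gaps' {J : Set ℝ} {lo hi : ℝ → ℝ≥0∞}
    (hlh : ∀ y ∈ J, lo y < hi y)
    (horder : ∀ y ∈ J, ∀ y' ∈ J, y < y' → hi y ≤ lo y') : J.Countable := by
  have : J = Neg.neg ⁻¹' (Neg.neg '' J) := by
    ext x; simp [Set.mem_image, neg_eq_iff_eq_neg]
  rw [this]
  refine (countable_of_ordered_gaps (lo := fun y => lo (-y)) (hi := fun y => hi (-y))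
    ?_ ?_).preimage neg_injective
  · rintro _ ⟨y, hy, rfl⟩
    simpa using hlh y hy
  · rintro _ ⟨y, hy, rfl⟩ _ ⟨y', hy', rfl⟩ hlt
    have : y' < y := by simpa using hlt
    simpa using horder y' hy' y hy this

section jump

variable {Q0 Qs Q1 : Measure ℝ} [IsProbabilityMeasure Q0] [IsProbabilityMeasure Qs]
    [IsProbabilityMeasure Q1]

/-- right-limit `α₊` is at most left-limit `α₋`. -/
lemma alphaplus_le_alphat (h0s : LikelihoodRatioLE Q0 Qs) {y : ℝ}
    (hy : y ∉ Tset Qs) (hy' : y ∉ Tset' Qs) :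
    sSup ((fun z => Q0 (Ioc y z) / Qs (Ioc y z)) '' Ioi y) ≤ alphat Q0 Qs y := by
  rw [alphat]
  refine le_iInf fun q => ?_
  split_ifs with hq
  swap
  · exact le_top
  refine sSup_le ?_
  rintro _ ⟨z, hz, rfl⟩
  refine ratio_le_ratio h0s measurableSet_Ioc measurableSet_Ioc ?_ (not_mem_Tset_iff.1 hy _ hq)
  intro p hp r hr
  exact le_trans hp.2 (le_of_lt hr.1)

lemma alphat_le_alphaplus_of_lt (h0s : LikelihoodRatioLE Q0 Qs) {y y' : ℝ} (hyy' : y < y')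
    (hy : y ∉ Tset' Qs) (hy' : y' ∉ Tset Qs) :
    alphat Q0 Qs y' ≤ sSup ((fun z => Q0 (Ioc y z) / Qs (Ioc y z)) '' Ioi y) := by
  set z := (y + y') / 2 with hz
  have hz1 : y < z := by rw [hz]; linarith
  have hz2 : z < y' := by rw [hz]; linarith
  obtain ⟨q, hq1, hq2⟩ := exists_rat_btwn hz2
  have step1 : alphat Q0 Qs y' ≤ Q0 (Ioc (q : ℝ) y') / Qs (Ioc (q : ℝ) y') := by
    calc alphat Q0 Qs y' ≤ _ := iInf_le _ q
      _ = Q0 (Ioc (q : ℝ) y') / Qs (Ioc (q : ℝ) y') := if_pos hq2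
  have step2 : Q0 (Ioc (q : ℝ) y') / Qs (Ioc (q : ℝ) y') ≤ Q0 (Ioc y z) / Qs (Ioc y z) := by
    refine ratio_le_ratio h0s measurableSet_Ioc measurableSet_Ioc ?_
      (not_mem_Tset'_iff.1 hy _ hz1)
    intro p hp r hr
    exact le_trans hp.2 (le_trans (le_of_lt hq1) (le_of_lt hr.1))
  exact le_trans (le_trans step1 step2) (le_sSup ⟨z, hz1, rfl⟩)

lemma betat_le_betaplus (hs1 : LikelihoodRatioLE Qs Q1) {y : ℝ}
    (hy : y ∉ Tset Qs) (hy' : y ∉ Tset' Qs) :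
    betat Q1 Qs y ≤ sInf ((fun z => Q1 (Ioc y z) / Qs (Ioc y z)) '' Ioi y) := by
  refine le_sInf ?_
  rintro _ ⟨z, hz, rfl⟩
  rw [betat]
  refine iSup_le fun q => ?_
  split_ifs with hq
  swap
  · exact zero_le
  refine ratio_ge_ratio hs1 measurableSet_Ioc measurableSet_Ioc ?_
    (not_mem_Tset'_iff.1 hy' _ hz)
  intro p hp r hr
  exact le_trans hp.2 (le_of_lt hr.1)

lemma betaplus_le_betat_of_lt (hs1 : LikelihoodRatioLE Qs Q1) {y y' : ℝ} (hyy' : y < y')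
    (hy : y ∉ Tset' Qs) (hy' : y' ∉ Tset Qs) :
    sInf ((fun z => Q1 (Ioc y z) / Qs (Ioc y z)) '' Ioi y) ≤ betat Q1 Qs y' := by
  set z := (y + y') / 2 with hz
  have hz1 : y < z := by rw [hz]; linarith
  have hz2 : z < y' := by rw [hz]; linarith
  obtain ⟨q, hq1, hq2⟩ := exists_rat_btwn hz2
  have step2 : Q1 (Ioc y z) / Qs (Ioc y z) ≤ Q1 (Ioc (q : ℝ) y') / Qs (Ioc (q : ℝ) y') := by
    refine ratio_ge_ratio hs1 measurableSet_Ioc measurableSet_Ioc ?_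
      (not_mem_Tset_iff.1 hy' _ hq2)
    intro p hp r hr
    exact le_trans hp.2 (le_trans (le_of_lt hq1) (le_of_lt hr.1))
  have step3 : Q1 (Ioc (q : ℝ) y') / Qs (Ioc (q : ℝ) y') ≤ betat Q1 Qs y' := by
    rw [betat]
    calc Q1 (Ioc (q : ℝ) y') / Qs (Ioc (q : ℝ) y')
        = if (q : ℝ) < y' then Q1 (Ioc (q : ℝ) y') / Qs (Ioc (q : ℝ) y') else 0 := (if_pos hq2).symm
      _ ≤ _ := le_iSup (fun q : ℚ => if (q : ℝ) < y' then Q1 (Ioc (q : ℝ) y') / Qs (Ioc (q : ℝ) y')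
            else 0) q
  exact le_trans (sInf_le ⟨z, hz1, rfl⟩) (le_trans step2 step3)

lemma jump0_countable (h0s : LikelihoodRatioLE Q0 Qs) :
    {y : ℝ | y ∉ Tset Qs ∧ y ∉ Tset' Qs ∧
      sSup ((fun z => Q0 (Ioc y z) / Qs (Ioc y z)) '' Ioi y) ≠ alphat Q0 Qs y}.Countable := by
  refine countable_of_ordered_gaps
    (lo := fun y => sSup ((fun z => Q0 (Ioc y z) / Qs (Ioc y z)) '' Ioi y))
    (hi := fun y => alphat Q0 Qs y) ?_ ?_
  · intro y hy
    exact lt_of_le_of_ne (alphaplus_le_alphat h0s hy.1 hy.2.1) hy.2.2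
  · intro y hy y' hy' hlt
    exact alphat_le_alphaplus_of_lt h0s hlt hy.2.1 hy'.1

lemma jump1_countable (hs1 : LikelihoodRatioLE Qs Q1) :
    {y : ℝ | y ∉ Tset Qs ∧ y ∉ Tset' Qs ∧
      betat Q1 Qs y ≠ sInf ((fun z => Q1 (Ioc y z) / Qs (Ioc y z)) '' Ioi y)}.Countable := by
  refine countable_of_ordered_gaps'
    (lo := fun y => betat Q1 Qs y)
    (hi := fun y => sInf ((fun z => Q1 (Ioc y z) / Qs (Ioc y z)) '' Ioi y)) ?_ ?_
  · intro y hy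
    exact lt_of_le_of_ne (betat_le_betaplus hs1 hy.1 hy.2.1) hy.2.2
  · intro y hy y' hy' hlt
    exact betaplus_le_betat_of_lt hs1 hlt hy.2.1 hy'.1

end jump

/-! ### identification with the Radon–Nikodym derivative -/

lemma singleton_eq_iInter_Ioc (y : ℝ) :
    ({y} : Set ℝ) = ⋂ n : ℕ, Ioc (y - ((n : ℝ) + 1)⁻¹) y := by
  ext x
  simp only [mem_singleton_iff, mem_iInter, mem_Ioc]
  constructor
  · rintro rfl
    intro n
    have : (0 : ℝ) < ((n : ℝ) + 1)⁻¹ := by positivity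
    constructor <;> linarith
  · intro h
    have hle : x ≤ y := (h 0).2
    by_contra hne
    have hlt : x < y := lt_of_le_of_ne hle hne
    obtain ⟨n, hn⟩ := exists_nat_gt (y - x)⁻¹
    have hyx : 0 < y - x := sub_pos.2 hlt
    have h1 : ((n : ℝ) + 1)⁻¹ < y - x := by
      rw [inv_lt_comm₀ (by positivity) hyx]
      exact lt_trans hn (lt_add_one _)
    have := (h n).1
    linarith

lemma singleton_eq_iInter_Icc (y : ℝ) :
    ({y} : Set ℝ) = ⋂ n : ℕ, Icc (y - ((n : ℝ) + 1)⁻¹) (y + ((n : ℝ) + 1)⁻¹) := by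
  ext x
  simp only [mem_singleton_iff, mem_iInter, mem_Icc]
  constructor
  · rintro rfl
    intro n
    have : (0 : ℝ) < ((n : ℝ) + 1)⁻¹ := by positivity
    constructor <;> linarith
  · intro h
    by_contra hne
    obtain ⟨n, hn⟩ := exists_nat_gt |y - x|⁻¹
    have hyx : 0 < |y - x| := abs_pos.2 (sub_ne_zero.2 (fun h' => hne h'.symm))
    have h1 : ((n : ℝ) + 1)⁻¹ < |y - x| := by
      rw [inv_lt_comm₀ (by positivity) hyx]
      exact lt_trans hn (lt_add_one _)
    have h2 := (h n).1
    have h3 := (h n).2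
    rcases abs_cases (y - x) with ⟨he, _⟩ | ⟨he, _⟩ <;> rw [he] at h1 <;> linarith

lemma tendsto_measure_Ioc_singleton (P : Measure ℝ) [IsFiniteMeasure P] (y : ℝ) :
    Tendsto (fun n : ℕ => P (Ioc (y - ((n : ℝ) + 1)⁻¹) y)) atTop (𝓝 (P {y})) := by
  have h := tendsto_measure_iInter_atTop (μ := P)
    (s := fun n : ℕ => Ioc (y - ((n : ℝ) + 1)⁻¹) y)
    (fun n => measurableSet_Ioc.nullMeasurableSet)
    (fun n m hnm => Ioc_subset_Ioc_left (by
      have : ((m : ℝ) + 1)⁻¹ ≤ ((n : ℝ) + 1)⁻¹ := by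
        apply inv_anti₀ (by positivity)
        exact_mod_cast by linarith [(Nat.cast_le (α := ℝ)).2 hnm]
      linarith))
    ⟨0, measure_ne_top P _⟩
  rwa [← singleton_eq_iInter_Ioc] at h

lemma tendsto_measure_Icc_singleton (P : Measure ℝ) [IsFiniteMeasure P] (y : ℝ) :
    Tendsto (fun n : ℕ => P (Icc (y - ((n : ℝ) + 1)⁻¹) (y + ((n : ℝ) + 1)⁻¹))) atTop
      (𝓝 (P {y})) := by
  have h := tendsto_measure_iInter_atTop (μ := P)
    (s := fun n : ℕ => Icc (y - ((n : ℝ) + 1)⁻¹) (y + ((n : ℝ) + 1)⁻¹))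
    (fun n => measurableSet_Icc.nullMeasurableSet)
    (fun n m hnm => Icc_subset_Icc (by
        have : ((m : ℝ) + 1)⁻¹ ≤ ((n : ℝ) + 1)⁻¹ := by
          apply inv_anti₀ (by positivity)
          exact_mod_cast by linarith [(Nat.cast_le (α := ℝ)).2 hnm]
        linarith) (by
        have : ((m : ℝ) + 1)⁻¹ ≤ ((n : ℝ) + 1)⁻¹ := by
          apply inv_anti₀ (by positivity)
          exact_mod_cast by linarith [(Nat.cast_le (α := ℝ)).2 hnm]
        linarith))
    ⟨0, measure_ne_top P _⟩
  rwa [← singleton_eq_iInter_Icc] at h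

lemma exists_radius {A : Set ℝ} (hA : A.Countable) (y : ℝ) (n : ℕ) :
    ∃ r : ℝ, r ∈ Ioo (0 : ℝ) ((n : ℝ) + 1)⁻¹ ∧ y - r ∉ A := by
  by_contra h
  push_neg at h
  have hsub : Ioo (0 : ℝ) ((n : ℝ) + 1)⁻¹ ⊆ (fun r => y - r) ⁻¹' A :=
    fun r hr => h r hr
  have hcnt : ((fun r : ℝ => y - r) ⁻¹' A).Countable :=
    hA.preimage (fun a b hab => by linarith [hab] )
  have hz := measure_mono_null hsub (hcnt.measure_zero volume)
  rw [Real.volume_Ioo] at hz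
  have : (0 : ℝ) < ((n : ℝ) + 1)⁻¹ := by positivity
  simp only [sub_zero] at hz
  exact absurd hz (by
    intro hcon
    have := ENNReal.ofReal_eq_zero.1 hcon
    linarith)

lemma Icc_measure_split (P : Measure ℝ) {a y b : ℝ} (hay : a ≤ y) (hyb : y ≤ b)
    (h0 : P {a} = 0) : P (Icc a b) = P (Ioc a y) + P (Ioc y b) := by
  have h1 : Icc a b = {a} ∪ Ioc a b := by
    ext x
    simp only [mem_Icc, union_singleton, mem_insert_iff, mem_Ioc]
    constructor
    · rintro ⟨hx1, hx2⟩
      rcases eq_or_lt_of_le hx1 with h | h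
      · exact Or.inl h.symm
      · exact Or.inr ⟨h, hx2⟩
    · rintro (rfl | ⟨hx1, hx2⟩)
      · exact ⟨le_refl _, le_trans hay hyb⟩
      · exact ⟨le_of_lt hx1, hx2⟩
  rw [h1, measure_union (by simp [Set.disjoint_singleton_left]) measurableSet_Ioc, h0, zero_add,
    measure_Ioc_split hay hyb]

lemma Qprob {Q0 Q1 : Measure ℝ} [IsProbabilityMeasure Q0] [IsProbabilityMeasure Q1]
    {l0 l1 : ℝ≥0∞} (hsum : l0 + l1 = 1) : IsProbabilityMeasure (l0 • Q0 + l1 • Q1) :=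
  ⟨by rw [Q_apply, measure_univ, measure_univ, mul_one, mul_one, hsum]⟩

lemma inv_nat_succ_tendsto : Tendsto (fun n : ℕ => ((n : ℝ) + 1)⁻¹) atTop (𝓝 (0 : ℝ)) := by
  have := tendsto_one_div_add_atTop_nhds_zero_nat (𝕜 := ℝ)
  simpa [one_div] using this

lemma gfun_ae_eq_rnDeriv (Q0 Qs Q1 : Measure ℝ) [IsProbabilityMeasure Q0]
    [IsProbabilityMeasure Qs] [IsProbabilityMeasure Q1]
    (h0s : LikelihoodRatioLE Q0 Qs) (hs1 : LikelihoodRatioLE Qs Q1)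
    (hsupp : ∀ x : ℝ, 0 < Q0 (Ioi x) + Q1 (Iio x))
    {l0 l1 : ℝ≥0∞} (hl0 : 0 < l0) (hl1 : 0 < l1) (hsum : l0 + l1 = 1) :
    gfun Q0 Qs Q1 l0 l1 =ᵐ[l0 • Q0 + l1 • Q1] Qs.rnDeriv (l0 • Q0 + l1 • Q1) := by
  haveI hQp : IsProbabilityMeasure (l0 • Q0 + l1 • Q1) := Qprob hsum
  have hl0t : l0 ≠ ⊤ := by
    intro h
    rw [h, top_add] at hsum
    exact ENNReal.top_ne_one hsum
  have hl1t : l1 ≠ ⊤ := by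
    intro h
    rw [h, add_top] at hsum
    exact ENNReal.top_ne_one hsum
  have hac : Qs ≪ (l0 • Q0 + l1 • Q1) := Qs_ac h0s hs1 hsupp hl0.ne' hl1.ne'
  have hbesi := Besicovitch.ae_tendsto_rnDeriv Qs (l0 • Q0 + l1 • Q1)
  have hfE : ∀ᵐ y ∂(l0 • Q0 + l1 • Q1), y ∈ Tset Qs →
      Qs.rnDeriv (l0 • Q0 + l1 • Q1) y = 0 := by
    refine (setLIntegral_eq_zero_iff (measurableSet_Tset Qs)
      (Measure.measurable_rnDeriv Qs _)).1 ?_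
    rw [Measure.setLIntegral_rnDeriv hac]
    exact Qs_Tset_null Qs
  have hAcnt : ({y : ℝ | (l0 • Q0 + l1 • Q1) {y} ≠ 0} ∪ {y : ℝ | Qs {y} ≠ 0}).Countable :=
    (atoms_countable _).union (atoms_countable _)
  have null_count : ∀ s : Set ℝ, s.Countable →
      (l0 • Q0 + l1 • Q1) (s \ {y | (l0 • Q0 + l1 • Q1) {y} ≠ 0}) = 0 := by
    intro s hs
    have hsub : s \ {y | (l0 • Q0 + l1 • Q1) {y} ≠ 0} ⊆
        ⋃ x ∈ s \ {y | (l0 • Q0 + l1 • Q1) {y} ≠ 0}, ({x} : Set ℝ) :=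
      fun x hx => mem_biUnion hx rfl
    refine measure_mono_null hsub ((measure_biUnion_null_iff (hs.mono diff_subset)).2 ?_)
    intro x hx
    exact not_ne_iff.1 hx.2
  have hn1 := null_count _ (Tset'_diff_countable Qs)
  have hn2 := null_count _ (jump0_countable (Qs := Qs) h0s)
  have hn3 := null_count _ (jump1_countable (Qs := Qs) hs1)
  filter_upwards [hbesi, hfE, measure_eq_zero_iff_ae_notMem.1 hn1, measure_eq_zero_iff_ae_notMem.1 hn2,
    measure_eq_zero_iff_ae_notMem.1 hn3] with y hb hE hy1 hy2 hy3
  by_cases hatom : (l0 • Q0 + l1 • Q1) {y} ≠ 0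
  · -- y is an atom of the mixture
    have hsn : Tendsto (fun n : ℕ => ((n : ℝ) + 1)⁻¹) atTop (𝓝[>] (0 : ℝ)) := by
      rw [tendsto_nhdsWithin_iff]
      exact ⟨inv_nat_succ_tendsto, Eventually.of_forall fun n => mem_Ioi.2 (by positivity)⟩
    have hseq := hb.comp hsn
    have hratio : Tendsto (fun n : ℕ => Qs (Metric.closedBall y (((n : ℝ) + 1)⁻¹)) /
        (l0 • Q0 + l1 • Q1) (Metric.closedBall y (((n : ℝ) + 1)⁻¹))) atTop
        (𝓝 (Qs {y} / (l0 • Q0 + l1 • Q1) {y})) := by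
      have h1 := tendsto_measure_Icc_singleton Qs y
      have h2 := tendsto_measure_Icc_singleton (l0 • Q0 + l1 • Q1) y
      have h3 := ENNReal.Tendsto.div h1 (Or.inr hatom) h2 (Or.inl (measure_ne_top _ _))
      refine h3.congr fun n => ?_
      rw [Real.closedBall_eq_Icc]
    have hf : Qs.rnDeriv (l0 • Q0 + l1 • Q1) y = Qs {y} / (l0 • Q0 + l1 • Q1) {y} :=
      tendsto_nhds_unique hseq hratio
    have hxn : Tendsto (fun n : ℕ => y - ((n : ℝ) + 1)⁻¹) atTop (𝓝[<] y) := by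
      rw [tendsto_nhdsWithin_iff]
      constructor
      · have := (tendsto_const_nhds (x := y) (f := atTop (α := ℕ))).sub inv_nat_succ_tendsto
        simpa using this
      · refine Eventually.of_forall fun n => ?_
        have : (0 : ℝ) < ((n : ℝ) + 1)⁻¹ := by positivity
        simp only [mem_Iio]
        linarith
    have hgl := (tendsto_gfun Q0 Qs Q1 h0s hs1 hl0t hl1t y).comp hxn
    have hgl2 : Tendsto (fun n : ℕ => Qs (Ioc (y - ((n : ℝ) + 1)⁻¹) y) /
        (l0 • Q0 + l1 • Q1) (Ioc (y - ((n : ℝ) + 1)⁻¹) y)) atTop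
        (𝓝 (Qs {y} / (l0 • Q0 + l1 • Q1) {y})) :=
      ENNReal.Tendsto.div (tendsto_measure_Ioc_singleton Qs y) (Or.inr hatom)
        (tendsto_measure_Ioc_singleton (l0 • Q0 + l1 • Q1) y) (Or.inl (measure_ne_top _ _))
    have hgval : gfun Q0 Qs Q1 l0 l1 y = Qs {y} / (l0 • Q0 + l1 • Q1) {y} :=
      tendsto_nhds_unique hgl hgl2
    rw [hgval, hf]
  · push_neg at hatom
    by_cases hyT : y ∈ Tset Qs
    · rw [gfun, if_pos hyT, hE hyT]
    · have hyT' : y ∉ Tset' Qs := by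
        intro h
        exact hy1 ⟨⟨h, hyT⟩, not_ne_iff.2 hatom⟩
      have hj0 : sSup ((fun z => Q0 (Ioc y z) / Qs (Ioc y z)) '' Ioi y) = alphat Q0 Qs y := by
        by_contra hne
        exact hy2 ⟨⟨hyT, hyT', hne⟩, not_ne_iff.2 hatom⟩
      have hj1 : betat Q1 Qs y = sInf ((fun z => Q1 (Ioc y z) / Qs (Ioc y z)) '' Ioi y) := by
        by_contra hne
        exact hy3 ⟨⟨hyT, hyT', hne⟩, not_ne_iff.2 hatom⟩
      have hgg : gplus Q0 Qs Q1 l0 l1 y = gfun Q0 Qs Q1 l0 l1 y := by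
        rw [gfun, if_neg hyT, gplus, hj0, ← hj1]
      choose r hr1 hr2 using fun n : ℕ => exists_radius hAcnt y n
      have hrpos : ∀ n, 0 < r n := fun n => (hr1 n).1
      have hr0 : Tendsto r atTop (𝓝 (0 : ℝ)) :=
        tendsto_of_tendsto_of_tendsto_of_le_of_le tendsto_const_nhds inv_nat_succ_tendsto
          (fun n => le_of_lt (hrpos n)) (fun n => le_of_lt (hr1 n).2)
      have hrt : Tendsto r atTop (𝓝[>] (0 : ℝ)) :=
        tendsto_nhdsWithin_iff.2 ⟨hr0, Eventually.of_forall fun n => hrpos n⟩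
      have hxn : Tendsto (fun n => y - r n) atTop (𝓝[<] y) := by
        rw [tendsto_nhdsWithin_iff]
        constructor
        · have := (tendsto_const_nhds (x := y) (f := atTop (α := ℕ))).sub hr0
          simpa using this
        · exact Eventually.of_forall fun n => by
            simp only [mem_Iio]; linarith [hrpos n]
      have hzn : Tendsto (fun n => y + r n) atTop (𝓝[>] y) := by
        rw [tendsto_nhdsWithin_iff]
        constructor
        · have := (tendsto_const_nhds (x := y) (f := atTop (α := ℕ))).add hr0
          simpa using this
        · exact Eventually.of_forall fun n => by
            simp only [mem_Ioi]; linarith [hrpos n]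
      have hL := (tendsto_gfun Q0 Qs Q1 h0s hs1 hl0t hl1t y).comp hxn
      have hR := (tendsto_gplus Q0 Qs Q1 h0s hs1 hl0t hl1t hyT').comp hzn
      rw [hgg] at hR
      have hQa : ∀ n, (l0 • Q0 + l1 • Q1) {y - r n} = 0 := by
        intro n
        have := hr2 n
        simp only [mem_union, mem_setOf_eq, not_or, not_not] at this
        exact this.1
      have hQsa : ∀ n, Qs {y - r n} = 0 := by
        intro n
        have := hr2 n
        simp only [mem_union, mem_setOf_eq, not_or, not_not] at this
        exact this.2
      have hsplitQ : ∀ n, (l0 • Q0 + l1 • Q1) (Metric.closedBall y (r n)) =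
          (l0 • Q0 + l1 • Q1) (Ioc (y - r n) y) + (l0 • Q0 + l1 • Q1) (Ioc y (y + r n)) := by
        intro n
        rw [Real.closedBall_eq_Icc]
        exact Icc_measure_split _ (by linarith [hrpos n]) (by linarith [hrpos n]) (hQa n)
      have hsplitQs : ∀ n, Qs (Metric.closedBall y (r n)) =
          Qs (Ioc (y - r n) y) + Qs (Ioc y (y + r n)) := by
        intro n
        rw [Real.closedBall_eq_Icc]
        exact Icc_measure_split _ (by linarith [hrpos n]) (by linarith [hrpos n]) (hQsa n)
      have hlow : ∀ n, min (Qs (Ioc (y - r n) y) / (l0 • Q0 + l1 • Q1) (Ioc (y - r n) y))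
          (Qs (Ioc y (y + r n)) / (l0 • Q0 + l1 • Q1) (Ioc y (y + r n))) ≤
          Qs (Metric.closedBall y (r n)) / (l0 • Q0 + l1 • Q1) (Metric.closedBall y (r n)) := by
        intro n
        rw [hsplitQ n, hsplitQs n]
        exact le_mediant (measure_ne_top _ _) (measure_ne_top _ _)
      have hupp : ∀ n, Qs (Metric.closedBall y (r n)) /
          (l0 • Q0 + l1 • Q1) (Metric.closedBall y (r n)) ≤
          max (Qs (Ioc (y - r n) y) / (l0 • Q0 + l1 • Q1) (Ioc (y - r n) y))
          (Qs (Ioc y (y + r n)) / (l0 • Q0 + l1 • Q1) (Ioc y (y + r n))) := by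
        intro n
        rw [hsplitQ n, hsplitQs n]
        exact mediant_le (measure_ne_top _ _) (measure_ne_top _ _)
      have hmin := hL.min hR
      rw [min_self] at hmin
      have hmax := hL.max hR
      rw [max_self] at hmax
      have hball := tendsto_of_tendsto_of_tendsto_of_le_of_le hmin hmax hlow hupp
      have hbcomp := hb.comp hrt
      exact tendsto_nhds_unique hball hbcomp

theorem stmt_18 (Q0 Qs Q1 : Measure ℝ)
    [IsProbabilityMeasure Q0] [IsProbabilityMeasure Qs] [IsProbabilityMeasure Q1]
    (h0s : LikelihoodRatioLE Q0 Qs) (hs1 : LikelihoodRatioLE Qs Q1)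
    (hsupp : ∀ x : ℝ, 0 < Q0 (Ioi x) + Q1 (Iio x))
    (l0 l1 : ENNReal) (hl0 : 0 < l0) (hl1 : 0 < l1) (hsum : l0 + l1 = 1) :
    ∃ g : ℝ → ENNReal,
      (∀ y : ℝ, Tendsto (fun x => Qs (Ioc x y) / (l0 • Q0 + l1 • Q1) (Ioc x y))
        (nhdsWithin y (Iio y)) (nhds (g y))) ∧
      (∃ C : ENNReal, C ≠ ⊤ ∧ ∀ y, g y ≤ C) ∧
      Measurable g ∧
      (∀ B : Set ℝ, MeasurableSet B → Qs B = ∫⁻ x in B, g x ∂(l0 • Q0 + l1 • Q1)) := by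
  have hl0t : l0 ≠ ⊤ := by
    intro h
    rw [h, top_add] at hsum
    exact ENNReal.top_ne_one hsum
  have hl1t : l1 ≠ ⊤ := by
    intro h
    rw [h, add_top] at hsum
    exact ENNReal.top_ne_one hsum
  refine ⟨gfun Q0 Qs Q1 l0 l1, ?_, ?_, ?_, ?_⟩
  · exact fun y => tendsto_gfun Q0 Qs Q1 h0s hs1 hl0t hl1t y
  · obtain ⟨ε, hε, hεle⟩ := exists_eps Q0 Q1 hsupp hl0 hl1 hl0t hl1t
    exact ⟨ε⁻¹, ENNReal.inv_ne_top.2 hε.ne', gfun_le h0s hs1 hεle⟩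
  · exact measurable_gfun Q0 Qs Q1 l0 l1
  · intro B hB
    haveI : IsProbabilityMeasure (l0 • Q0 + l1 • Q1) := Qprob hsum
    have hac := Qs_ac h0s hs1 hsupp hl0.ne' hl1.ne'
    have hae := gfun_ae_eq_rnDeriv Q0 Qs Q1 h0s hs1 hsupp hl0 hl1 hsum
    have heq : ∫⁻ x in B, gfun Q0 Qs Q1 l0 l1 x ∂(l0 • Q0 + l1 • Q1)
        = ∫⁻ x in B, Qs.rnDeriv (l0 • Q0 + l1 • Q1) x ∂(l0 • Q0 + l1 • Q1) :=
      lintegral_congr_ae (ae_restrict_of_ae hae)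
    rw [heq, Measure.setLIntegral_rnDeriv hac B]
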